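/- Let (Z_{kl})_{1≤k,l≤M} be mutually independent complex-valued square-integrable random variables with E[Z_{kl}] = 0 and E[|Z_{kl}|²] = 1/M for all k,l. Let K = {k_1<…<k_n}, L = {l_1<…<l_n}, K' = {k'_1<…<k'_m}, L' = {l'_1<…<l'_m} be subsets of {1,…,M}. Then E[per Z(K|L) · conj(per Z(K'|L'))] = n!/M^n if n = m, K = K' and L = L', and E[per Z(K|L) · conj(per Z(K'|L'))] = 0 otherwise. -/

import Mathlib

open Finset MeasureTheory ProbabilityTheory

lemma my_iIndepFun_ae_eq {ι Ω β : Type*} [MeasurableSpace Ω] {mβ : MeasurableSpace β}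
    {μ : Measure Ω} {f g : ι → Ω → β}
    (h : iIndepFun (m := fun _ => mβ) f μ) (hfg : ∀ i, f i =ᵐ[μ] g i) :
    iIndepFun (m := fun _ => mβ) g μ := by
  rw [iIndepFun_iff_measure_inter_preimage_eq_mul] at h ⊢
  intro S sets hsets
  have h1 : ∀ i, μ (g i ⁻¹' sets i) = μ (f i ⁻¹' sets i) := fun i =>
    measure_congr ((hfg i).mono fun ω hω => by
      show (g i ω ∈ sets i) = (f i ω ∈ sets i); rw [hω])
  have h2 : μ (⋂ i ∈ S, g i ⁻¹' sets i) = μ (⋂ i ∈ S, f i ⁻¹' sets i) := by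
    apply measure_congr
    have hall : ∀ᵐ ω ∂μ, ∀ i ∈ S, f i ω = g i ω :=
      (Filter.eventually_all_finset S).2 fun i _ => hfg i
    filter_upwards [hall] with ω hω
    show (ω ∈ ⋂ i ∈ S, g i ⁻¹' sets i) = (ω ∈ ⋂ i ∈ S, f i ⁻¹' sets i)
    simp only [eq_iff_iff, Set.mem_iInter, Set.mem_preimage]
    exact forall₂_congr fun i hi => by rw [hω i hi]
  rw [h2, h S hsets]
  exact Finset.prod_congr rfl fun i _ => (h1 i).symm

lemma my_indepFun_integral_mul {Ω : Type*} [MeasurableSpace Ω] {μ : Measure Ω}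
    [IsProbabilityMeasure μ] {X Y : Ω → ℂ} (hXY : IndepFun X Y μ)
    (hX : Integrable X μ) (hY : Integrable Y μ) :
    ∫ ω, X ω * Y ω ∂μ = (∫ ω, X ω ∂μ) * ∫ ω, Y ω ∂μ := by
  have hXm : AEMeasurable X μ := hX.1.aemeasurable
  have hYm : AEMeasurable Y μ := hY.1.aemeasurable
  have hmap := (indepFun_iff_map_prod_eq_prod_map_map hXm hYm).1 hXY
  have hpair : AEMeasurable (fun ω => (X ω, Y ω)) μ := hXm.prodMk hYm
  have h1 : ∫ ω, X ω * Y ω ∂μ = ∫ p : ℂ × ℂ, p.1 * p.2 ∂(μ.map fun ω => (X ω, Y ω)) := by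
    rw [integral_map hpair]
    exact (Continuous.aestronglyMeasurable (by continuity))
  rw [h1, hmap]
  have : IsProbabilityMeasure (μ.map X) := Measure.isProbabilityMeasure_map hXm
  have : IsProbabilityMeasure (μ.map Y) := Measure.isProbabilityMeasure_map hYm
  rw [show (fun p : ℂ × ℂ => p.1 * p.2) = fun p : ℂ × ℂ => id p.1 * id p.2 from rfl,
    integral_prod_mul (μ := μ.map X) (ν := μ.map Y) id id]
  rw [integral_map hXm aestronglyMeasurable_id, integral_map hYm aestronglyMeasurable_id]
  rfl

lemma my_integral_finset_prod_of_indep {Ω ι : Type*} [MeasurableSpace Ω] {μ : Measure Ω}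
    [IsProbabilityMeasure μ] {f : ι → Ω → ℂ}
    (hindep : iIndepFun f μ)
    (hmeas : ∀ i, Measurable (f i)) (hint : ∀ i, Integrable (f i) μ) (s : Finset ι) :
    Integrable (fun ω => ∏ i ∈ s, f i ω) μ ∧
      ∫ ω, ∏ i ∈ s, f i ω ∂μ = ∏ i ∈ s, ∫ ω, f i ω ∂μ := by
  classical
  induction s using Finset.cons_induction with
  | empty => simp
  | cons i s hi ih =>
    have hprodfun : (fun ω => ∏ j ∈ s, f j ω) = ∏ j ∈ s, f j := by
      ext ω; simp [Finset.prod_apply]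
    have hIndep : IndepFun (∏ j ∈ s, f j) (f i) μ :=
      hindep.indepFun_finsetProd_of_notMem hmeas hi
    have h1 : Integrable (∏ j ∈ s, f j) μ := hprodfun ▸ ih.1
    have h2 : Integrable ((∏ j ∈ s, f j) * f i) μ := hIndep.integrable_mul h1 (hint i)
    have h3 : ∫ ω, (∏ j ∈ s, f j) ω * f i ω ∂μ
        = (∫ ω, (∏ j ∈ s, f j) ω ∂μ) * ∫ ω, f i ω ∂μ :=
      my_indepFun_integral_mul hIndep h1 (hint i)
    constructor
    · have : (fun ω => ∏ j ∈ Finset.cons i s hi, f j ω) = (∏ j ∈ s, f j) * f i := by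
        ext ω; simp [Finset.prod_cons, Finset.prod_insert hi, mul_comm, Pi.mul_apply, Finset.prod_apply]
      rw [this]; exact h2
    · have hfun : (fun ω => ∏ j ∈ Finset.cons i s hi, f j ω)
          = fun ω => ((∏ j ∈ s, f j) * f i) ω := by
        ext ω; simp [Finset.prod_cons, Finset.prod_insert hi, mul_comm, Pi.mul_apply, Finset.prod_apply]
      calc ∫ ω, ∏ j ∈ Finset.cons i s hi, f j ω ∂μ
          = ∫ ω, ((∏ j ∈ s, f j) * f i) ω ∂μ := by rw [hfun]
        _ = (∫ ω, (∏ j ∈ s, f j) ω ∂μ) * ∫ ω, f i ω ∂μ := h3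
        _ = (∏ j ∈ s, ∫ ω, f j ω ∂μ) * ∫ ω, f i ω ∂μ := by
              rw [← hprodfun]; rw [ih.2]
        _ = ∏ j ∈ Finset.cons i s hi, ∫ ω, f j ω ∂μ := by
              rw [Finset.prod_cons, mul_comm]


section Graph

variable {M : ℕ} {K L : Finset (Fin M)}

/-- The graph of a bijection `e : K ≃ L` as a finset of pairs. -/
def ggraph (e : {x // x ∈ K} ≃ {y // y ∈ L}) : Finset (Fin M × Fin M) :=
  Finset.univ.image fun k : {x // x ∈ K} => ((k : Fin M), ((e k : {y // y ∈ L}) : Fin M))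

lemma mem_ggraph {e : {x // x ∈ K} ≃ {y // y ∈ L}} {p : Fin M × Fin M} :
    p ∈ ggraph e ↔ ∃ h : p.1 ∈ K, ((e ⟨p.1, h⟩ : {y // y ∈ L}) : Fin M) = p.2 := by
  simp only [ggraph, Finset.mem_image, Finset.mem_univ, true_and]
  constructor
  · rintro ⟨k, rfl⟩
    exact ⟨k.2, rfl⟩
  · rintro ⟨h, he⟩
    exact ⟨⟨p.1, h⟩, Prod.ext rfl he⟩

lemma ggraph_inj_map (e : {x // x ∈ K} ≃ {y // y ∈ L}) :
    Function.Injective (fun k : {x // x ∈ K} =>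
      ((k : Fin M), ((e k : {y // y ∈ L}) : Fin M))) :=
  fun a b hab => Subtype.ext (congrArg Prod.fst hab)

lemma prod_ggraph (e : {x // x ∈ K} ≃ {y // y ∈ L}) (A : Fin M → Fin M → ℂ) :
    ∏ p ∈ ggraph e, A p.1 p.2 = ∏ k : {x // x ∈ K}, A k (e k) :=
  Finset.prod_image fun a _ b _ h => ggraph_inj_map e h

lemma card_ggraph (e : {x // x ∈ K} ≃ {y // y ∈ L}) : (ggraph e).card = K.card := by
  rw [ggraph, Finset.card_image_of_injective _ (ggraph_inj_map e), Finset.card_univ,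
    Fintype.card_coe]

lemma ggraph_fst {e : {x // x ∈ K} ≃ {y // y ∈ L}} {k : Fin M} :
    (∃ l, (k, l) ∈ ggraph e) ↔ k ∈ K := by
  constructor
  · rintro ⟨l, hl⟩
    exact (mem_ggraph.1 hl).1
  · intro hk
    exact ⟨e ⟨k, hk⟩, mem_ggraph.2 ⟨hk, rfl⟩⟩

lemma ggraph_snd {e : {x // x ∈ K} ≃ {y // y ∈ L}} {l : Fin M} :
    (∃ k, (k, l) ∈ ggraph e) ↔ l ∈ L := by
  constructor
  · rintro ⟨k, hl⟩
    obtain ⟨h, he⟩ := mem_ggraph.1 hl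
    have := (e ⟨(k, l).1, h⟩).2
    rwa [he] at this
  · intro hl
    refine ⟨(e.symm ⟨l, hl⟩ : {x // x ∈ K}), mem_ggraph.2 ⟨(e.symm ⟨l, hl⟩).2, ?_⟩⟩
    rw [show (⟨((e.symm ⟨l, hl⟩ : {x // x ∈ K}) : Fin M), (e.symm ⟨l, hl⟩).2⟩ : {x // x ∈ K})
      = e.symm ⟨l, hl⟩ from rfl, e.apply_symm_apply]

lemma ggraph_injective {e f : {x // x ∈ K} ≃ {y // y ∈ L}} (h : ggraph e = ggraph f) :
    e = f := by
  apply Equiv.ext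
  intro k
  apply Subtype.ext
  have hm : ((k : Fin M), ((e k : {y // y ∈ L}) : Fin M)) ∈ ggraph f :=
    h ▸ mem_ggraph.2 ⟨k.2, rfl⟩
  obtain ⟨h1, h2⟩ := mem_ggraph.1 hm
  exact h2.symm

end Graph

lemma key_term {Ω : Type*} [MeasurableSpace Ω] {μ : Measure Ω} [IsProbabilityMeasure μ]
    {M : ℕ} {W : Fin M → Fin M → Ω → ℂ}
    (hindepW : iIndepFun
      (fun p : Fin M × Fin M => W p.1 p.2) μ)
    (hWmeas : ∀ k l, Measurable (W k l))
    (hL2W : ∀ k l, MemLp (W k l) 2 μ)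
    (hmeanW : ∀ k l, ∫ ω, W k l ω ∂μ = 0)
    (hvarW : ∀ k l, ∫ ω, ‖W k l ω‖ ^ 2 ∂μ = 1 / (M : ℝ))
    {K L K' L' : Finset (Fin M)}
    (e : {x // x ∈ K} ≃ {y // y ∈ L}) (f : {x // x ∈ K'} ≃ {y // y ∈ L'}) :
    Integrable (fun ω => (∏ k : {x // x ∈ K}, W k (e k) ω) *
      (starRingEnd ℂ) (∏ k : {x // x ∈ K'}, W k (f k) ω)) μ ∧
    ∫ ω, (∏ k : {x // x ∈ K}, W k (e k) ω) *
        (starRingEnd ℂ) (∏ k : {x // x ∈ K'}, W k (f k) ω) ∂μ =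
      if ggraph e = ggraph f then ((1 / (M : ℝ) : ℝ) : ℂ) ^ K.card else 0 := by
  classical
  set A := ggraph e with hA
  set B := ggraph f with hB
  set g : Fin M × Fin M → Ω → ℂ := fun p ω =>
    (if p ∈ A then W p.1 p.2 ω else 1) * (if p ∈ B then (starRingEnd ℂ) (W p.1 p.2 ω) else 1)
    with hg
  have hgmeas : ∀ p, Measurable (g p) := by
    intro p
    apply Measurable.mul
    · split_ifs
      · exact hWmeas p.1 p.2
      · exact measurable_const
    · split_ifs
      · exact (RCLike.continuous_conj.measurable).comp (hWmeas p.1 p.2)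
      · exact measurable_const
  have hgindep : iIndepFun g μ := by
    have h := hindepW.comp
      (fun p (z : ℂ) => (if p ∈ A then z else 1) * (if p ∈ B then (starRingEnd ℂ) z else 1))
      (fun p => by
        apply Measurable.mul
        · split_ifs
          · exact measurable_id
          · exact measurable_const
        · split_ifs
          · exact RCLike.continuous_conj.measurable
          · exact measurable_const)
    exact h
  have hWint : ∀ k l, Integrable (W k l) μ := fun k l => (hL2W k l).integrable one_le_two
  have hWsq : ∀ k l, (fun ω => W k l ω * (starRingEnd ℂ) (W k l ω))
      = fun ω => ((‖W k l ω‖ ^ 2 : ℝ) : ℂ) := by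
    intro k l; funext ω
    rw [RCLike.mul_conj]
    norm_cast
  have hWsq_int : ∀ k l, Integrable (fun ω => ((‖W k l ω‖ ^ 2 : ℝ) : ℂ)) μ := by
    intro k l
    have h2 : Integrable (fun ω => ‖W k l ω‖ ^ ((2 : ENNReal).toReal)) μ :=
      (hL2W k l).integrable_norm_rpow two_ne_zero ENNReal.ofNat_ne_top
    have h3 : Integrable (fun ω => ‖W k l ω‖ ^ (2 : ℕ)) μ := by
      have heq : (fun ω => ‖W k l ω‖ ^ (2 : ℕ))
          = fun ω => ‖W k l ω‖ ^ ((2 : ENNReal).toReal) := by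
        funext ω
        rw [← Real.rpow_natCast]
        norm_num
      rw [heq]
      exact h2
    exact h3.ofReal
  have hconj_int : ∀ k l, Integrable (fun ω => (starRingEnd ℂ) (W k l ω)) μ := by
    intro k l
    refine ⟨RCLike.continuous_conj.comp_aestronglyMeasurable (hWint k l).1, ?_⟩
    simpa [HasFiniteIntegral, RCLike.norm_conj] using (hWint k l).2
  have hgint : ∀ p, Integrable (g p) μ := by
    intro p
    by_cases hpA : p ∈ A <;> by_cases hpB : p ∈ B <;>
      simp only [hg, hpA, hpB, if_true, if_false, mul_one, one_mul]
    · exact (hWsq p.1 p.2 ▸ hWsq_int p.1 p.2 : _)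
    · exact hWint p.1 p.2
    · exact hconj_int p.1 p.2
    · exact integrable_const 1
  have hgval : ∀ p, ∫ ω, g p ω ∂μ =
      if p ∈ A then (if p ∈ B then ((1 / (M : ℝ) : ℝ) : ℂ) else 0)
      else (if p ∈ B then 0 else 1) := by
    intro p
    by_cases hpA : p ∈ A <;> by_cases hpB : p ∈ B <;>
      simp only [hg, hpA, hpB, if_true, if_false, mul_one, one_mul]
    · have := hWsq p.1 p.2
      calc ∫ ω, W p.1 p.2 ω * (starRingEnd ℂ) (W p.1 p.2 ω) ∂μ
          = ∫ ω, ((‖W p.1 p.2 ω‖ ^ 2 : ℝ) : ℂ) ∂μ := by rw [show (fun ω => W p.1 p.2 ω *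
              (starRingEnd ℂ) (W p.1 p.2 ω)) = fun ω => ((‖W p.1 p.2 ω‖ ^ 2 : ℝ) : ℂ) from this]
        _ = ((∫ ω, ‖W p.1 p.2 ω‖ ^ 2 ∂μ : ℝ) : ℂ) := integral_ofReal
        _ = ((1 / (M : ℝ) : ℝ) : ℂ) := by rw [hvarW]
    · exact hmeanW p.1 p.2
    · rw [integral_conj, hmeanW, map_zero]
    · simp
  have hprod : ∀ ω, (∏ k : {x // x ∈ K}, W k (e k) ω) *
      (starRingEnd ℂ) (∏ k : {x // x ∈ K'}, W k (f k) ω) = ∏ p ∈ A ∪ B, g p ω := by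
    intro ω
    rw [← prod_ggraph e (fun k l => W k l ω), ← prod_ggraph f (fun k l => W k l ω), map_prod]
    have hA' : ∏ p ∈ A, W p.1 p.2 ω = ∏ p ∈ A ∪ B, (if p ∈ A then W p.1 p.2 ω else 1) := by
      rw [Finset.prod_ite_mem (A ∪ B) A, Finset.union_inter_cancel_left]
    have hB' : ∏ p ∈ B, (starRingEnd ℂ) (W p.1 p.2 ω)
        = ∏ p ∈ A ∪ B, (if p ∈ B then (starRingEnd ℂ) (W p.1 p.2 ω) else 1) := by
      rw [Finset.prod_ite_mem (A ∪ B) B, Finset.union_inter_cancel_right]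
    rw [hA', hB', ← Finset.prod_mul_distrib]
  obtain ⟨hInt, hVal⟩ := my_integral_finset_prod_of_indep hgindep hgmeas hgint (A ∪ B)
  constructor
  · exact (funext hprod : _) ▸ hInt
  · rw [show (fun ω => (∏ k : {x // x ∈ K}, W k (e k) ω) *
      (starRingEnd ℂ) (∏ k : {x // x ∈ K'}, W k (f k) ω)) = fun ω => ∏ p ∈ A ∪ B, g p ω
      from funext hprod]
    rw [hVal]
    by_cases hAB : A = B
    · rw [if_pos hAB]
      rw [← hAB, Finset.union_self]
      have : ∀ p ∈ A, ∫ ω, g p ω ∂μ = ((1 / (M : ℝ) : ℝ) : ℂ) := by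
        intro p hp
        rw [hgval p, if_pos hp, if_pos (hAB ▸ hp)]
      rw [Finset.prod_congr rfl this, Finset.prod_const, card_ggraph]
    · rw [if_neg hAB]
      obtain ⟨p, hp⟩ : ∃ p, ¬(p ∈ A ↔ p ∈ B) := by
        by_contra h
        push_neg at h
        exact hAB (Finset.ext fun p => h p)
      rw [not_iff] at hp
      have hpmem : p ∈ A ∪ B := by
        rcases Decidable.em (p ∈ A) with h | h
        · exact Finset.mem_union_left _ h
        · exact Finset.mem_union_right _ (hp.1 h)
      refine Finset.prod_eq_zero hpmem ?_
      rw [hgval p]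
      rcases Decidable.em (p ∈ A) with h | h
      · rw [if_pos h, if_neg (fun hb => (hp.2 hb) h)]
      · rw [if_neg h, if_pos (hp.1 h)]


/-- Permanent of the submatrix of `A` on the row set `K` and the column set `L`:
the sum over all bijections `e : K ≃ L` of `∏_{k ∈ K} A k (e k)`.
When `K.card = L.card = n` this is exactly the permanent of the `n × n` submatrix
`A(K|L)`; for `K = L = ∅` it equals `1` (the permanent of the empty matrix). -/
noncomputable def permOn {α β : Type*} [DecidableEq α] [DecidableEq β]
    (A : α → β → ℂ) (K : Finset α) (L : Finset β) : ℂ :=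
  ∑ e : {x // x ∈ K} ≃ {y // y ∈ L}, ∏ k : {x // x ∈ K}, A k (e k)

/-- **Second moments of permanents of submatrices of a random matrix.**
If `(Z k l)` are mutually independent square-integrable complex random variables with
`E[Z k l] = 0` and `E[|Z k l|²] = 1/M`, and `K, L, K', L'` are subsets of `{1,…,M}`
with `|K| = |L| = n` and `|K'| = |L'| = m`, then
`E[per Z(K|L) · conj(per Z(K'|L'))]` equals `n!/Mⁿ` if `n = m`, `K = K'` and `L = L'`,
and equals `0` otherwise. -/
theorem expectation_permanent_product
    {Ω : Type*} [MeasurableSpace Ω] (μ : Measure Ω) [IsProbabilityMeasure μ]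
    (M : ℕ) (Z : Fin M → Fin M → Ω → ℂ)
    (hindep : iIndepFun
      (fun p : Fin M × Fin M => Z p.1 p.2) μ)
    (hL2 : ∀ k l, MemLp (Z k l) 2 μ)
    (hmean : ∀ k l, ∫ ω, Z k l ω ∂μ = 0)
    (hvar : ∀ k l, ∫ ω, ‖Z k l ω‖ ^ 2 ∂μ = 1 / (M : ℝ))
    (n m : ℕ) (K L K' L' : Finset (Fin M))
    (hK : K.card = n) (hL : L.card = n) (hK' : K'.card = m) (hL' : L'.card = m) :
    ∫ ω, permOn (fun k l => Z k l ω) K L *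
        (starRingEnd ℂ) (permOn (fun k l => Z k l ω) K' L') ∂μ =
      if n = m ∧ K = K' ∧ L = L' then (n.factorial : ℂ) / (M : ℂ) ^ n else 0 := by
  classical
  -- measurable modifications of the random variables
  set W : Fin M → Fin M → Ω → ℂ := fun k l => (hL2 k l).1.mk (Z k l) with hWdef
  have hZW : ∀ k l, Z k l =ᵐ[μ] W k l := fun k l => (hL2 k l).1.ae_eq_mk
  have hWmeas : ∀ k l, Measurable (W k l) :=
    fun k l => (hL2 k l).1.stronglyMeasurable_mk.measurable
  have hindepW : iIndepFun
      (fun p : Fin M × Fin M => W p.1 p.2) μ :=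
    my_iIndepFun_ae_eq hindep fun p => hZW p.1 p.2
  have hL2W : ∀ k l, MemLp (W k l) 2 μ := fun k l => (hL2 k l).ae_eq (hZW k l)
  have hmeanW : ∀ k l, ∫ ω, W k l ω ∂μ = 0 := fun k l => by
    rw [← integral_congr_ae (hZW k l)]; exact hmean k l
  have hvarW : ∀ k l, ∫ ω, ‖W k l ω‖ ^ 2 ∂μ = 1 / (M : ℝ) := fun k l => by
    have hn : (fun ω => ‖Z k l ω‖ ^ 2) =ᵐ[μ] fun ω => ‖W k l ω‖ ^ 2 :=
      (hZW k l).mono fun ω h => by simp only [h]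
    rw [← integral_congr_ae hn]; exact hvar k l
  -- replace `Z` by `W` in the integrand
  have hstep1 : ∫ ω, permOn (fun k l => Z k l ω) K L *
      (starRingEnd ℂ) (permOn (fun k l => Z k l ω) K' L') ∂μ =
      ∫ ω, permOn (fun k l => W k l ω) K L *
      (starRingEnd ℂ) (permOn (fun k l => W k l ω) K' L') ∂μ := by
    apply integral_congr_ae
    have hae : ∀ᵐ ω ∂μ, ∀ k l, Z k l ω = W k l ω := by
      rw [ae_all_iff]; intro k; rw [ae_all_iff]; intro l; exact hZW k l
    filter_upwards [hae] with ω hω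
    have hfun : (fun k l => Z k l ω) = fun k l => W k l ω := by
      funext k l; exact hω k l
    rw [hfun]
  rw [hstep1]
  -- expand the permanents
  have hexp : ∀ ω : Ω, permOn (fun k l => W k l ω) K L *
      (starRingEnd ℂ) (permOn (fun k l => W k l ω) K' L') =
      ∑ e : {x // x ∈ K} ≃ {y // y ∈ L}, ∑ f : {x // x ∈ K'} ≃ {y // y ∈ L'},
        (∏ k : {x // x ∈ K}, W k (e k) ω) *
          (starRingEnd ℂ) (∏ k : {x // x ∈ K'}, W k (f k) ω) := by
    intro ω
    rw [permOn, permOn, map_sum, Finset.sum_mul_sum]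
  have hstep2 : ∫ ω, permOn (fun k l => W k l ω) K L *
      (starRingEnd ℂ) (permOn (fun k l => W k l ω) K' L') ∂μ =
      ∑ e : {x // x ∈ K} ≃ {y // y ∈ L}, ∑ f : {x // x ∈ K'} ≃ {y // y ∈ L'},
        ∫ ω, (∏ k : {x // x ∈ K}, W k (e k) ω) *
          (starRingEnd ℂ) (∏ k : {x // x ∈ K'}, W k (f k) ω) ∂μ := by
    rw [show (fun ω => permOn (fun k l => W k l ω) K L *
      (starRingEnd ℂ) (permOn (fun k l => W k l ω) K' L')) = fun ω =>
      ∑ e : {x // x ∈ K} ≃ {y // y ∈ L}, ∑ f : {x // x ∈ K'} ≃ {y // y ∈ L'},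
        (∏ k : {x // x ∈ K}, W k (e k) ω) *
          (starRingEnd ℂ) (∏ k : {x // x ∈ K'}, W k (f k) ω) from funext hexp]
    rw [integral_finset_sum _ fun e _ => integrable_finset_sum _ fun f _ =>
      (key_term hindepW hWmeas hL2W hmeanW hvarW e f).1]
    refine Finset.sum_congr rfl fun e _ => ?_
    exact integral_finset_sum _ fun f _ => (key_term hindepW hWmeas hL2W hmeanW hvarW e f).1
  rw [hstep2]
  have hstep3 : ∀ (e : {x // x ∈ K} ≃ {y // y ∈ L}) (f : {x // x ∈ K'} ≃ {y // y ∈ L'}),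
      ∫ ω, (∏ k : {x // x ∈ K}, W k (e k) ω) *
          (starRingEnd ℂ) (∏ k : {x // x ∈ K'}, W k (f k) ω) ∂μ =
        if ggraph e = ggraph f then ((1 / (M : ℝ) : ℝ) : ℂ) ^ K.card else 0 :=
    fun e f => (key_term hindepW hWmeas hL2W hmeanW hvarW e f).2
  simp only [hstep3]
  by_cases hcond : n = m ∧ K = K' ∧ L = L'
  · obtain ⟨hnm, rfl, rfl⟩ := hcond
    rw [if_pos ⟨hnm, rfl, rfl⟩]
    have hiff : ∀ e f : {x // x ∈ K} ≃ {y // y ∈ L},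
        (ggraph e = ggraph f) = (e = f) := fun e f =>
      propext ⟨ggraph_injective, by rintro rfl; rfl⟩
    calc (∑ e : {x // x ∈ K} ≃ {y // y ∈ L}, ∑ f : {x // x ∈ K} ≃ {y // y ∈ L},
          if ggraph e = ggraph f then ((1 / (M : ℝ) : ℝ) : ℂ) ^ K.card else 0)
        = ∑ _e : {x // x ∈ K} ≃ {y // y ∈ L}, ((1 / (M : ℝ) : ℝ) : ℂ) ^ K.card := by
          refine Finset.sum_congr rfl fun e _ => ?_
          simp only [hiff]
          rw [Finset.sum_ite_eq Finset.univ e fun _ => ((1 / (M : ℝ) : ℝ) : ℂ) ^ K.card,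
            if_pos (Finset.mem_univ e)]
      _ = (Fintype.card ({x // x ∈ K} ≃ {y // y ∈ L}) : ℂ) *
            ((1 / (M : ℝ) : ℝ) : ℂ) ^ K.card := by
          rw [Finset.sum_const, Finset.card_univ, nsmul_eq_mul]
      _ = (n.factorial : ℂ) / (M : ℂ) ^ n := by
          have hcard : Fintype.card ({x // x ∈ K} ≃ {y // y ∈ L}) = n.factorial := by
            rw [Fintype.card_equiv (Fintype.equivOfCardEq (by
              rw [Fintype.card_coe, Fintype.card_coe, hK, hL]))]
            rw [Fintype.card_coe, hK]
          rw [hcard, hK]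
          have hc : ((1 / (M : ℝ) : ℝ) : ℂ) = 1 / (M : ℂ) := by push_cast; ring
          rw [hc, div_pow, one_pow, mul_one_div]
  · rw [if_neg hcond]
    have hKL : ¬(K = K' ∧ L = L') := by
      rintro ⟨rfl, rfl⟩
      exact hcond ⟨by rw [← hK, hK'], rfl, rfl⟩
    refine Finset.sum_eq_zero fun e _ => Finset.sum_eq_zero fun f _ => ?_
    rw [if_neg]
    intro hgr
    refine hKL ⟨?_, ?_⟩
    · exact Finset.ext fun k => by
        rw [← ggraph_fst (e := e), ← ggraph_fst (e := f), hgr]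
    · exact Finset.ext fun l => by
        rw [← ggraph_snd (e := e), ← ggraph_snd (e := f), hgr]
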